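/- Let p be a prime, q = p^{N} with N ≥ 2, and b ∈ ℕ with gcd(b, p(q−1)) = 1. Then for any nonnegative integers n₁,…,n_u and b₁,…,b_u with 0 < b₁ + ⋯ + b_u < p, the sum b₁p^{n₁} + ⋯ + b_u p^{n_u} is not divisible by q − 1. -/

import Mathlib

/-- Let `p` be a prime, `q = p^N` with `N ≥ 2`, and `b ∈ ℕ` with `gcd(b, p(q-1)) = 1`.
Then for any nonnegative integers `n₁,…,n_u` and `b₁,…,b_u` with `0 < b₁ + ⋯ + b_u < p`,
the sum `b₁p^{n₁} + ⋯ + b_u p^{n_u}` is not divisible by `q - 1`. -/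
theorem stmt0 (p N q b : ℕ) (hp : p.Prime) (hN : 2 ≤ N) (hq : q = p ^ N)
    (hb : Nat.gcd b (p * (q - 1)) = 1)
    (u : ℕ) (n c : Fin u → ℕ)
    (hpos : 0 < ∑ i, c i) (hlt : (∑ i, c i) < p) :
    ¬ ((q - 1) ∣ ∑ i, c i * p ^ n i) := by
  intro hdvd
  subst hq
  have hp2 := hp.two_le
  have hpN1 : 2 ≤ p ^ (N - 1) := le_trans hp2 (Nat.le_self_pow (by omega) p)
  have hpN : p ^ N = p * p ^ (N - 1) := by
    rw [← pow_succ']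
    congr 1
    omega
  have hqpos : 1 < p ^ N := Nat.one_lt_pow (by omega) (by omega)
  have hone : (1 : ℕ) ≡ p ^ N [MOD p ^ N - 1] :=
    (Nat.modEq_iff_dvd' (by omega)).mpr dvd_rfl
  -- each term is congruent with exponent reduced mod N
  have hterm : ∀ i, c i * p ^ (n i % N) ≡ c i * p ^ n i [MOD p ^ N - 1] := by
    intro i
    have : p ^ (n i % N) ≡ p ^ n i [MOD p ^ N - 1] := by
      conv_rhs => rw [← Nat.div_add_mod (n i) N]
      rw [pow_add, pow_mul]
      calc p ^ (n i % N) = 1 ^ (n i / N) * p ^ (n i % N) := by ring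
        _ ≡ (p ^ N) ^ (n i / N) * p ^ (n i % N) [MOD p ^ N - 1] :=
            Nat.ModEq.mul (hone.pow _) Nat.ModEq.rfl
    exact Nat.ModEq.mul_left _ this
  have hsum : (∑ i, c i * p ^ (n i % N)) ≡ (∑ i, c i * p ^ n i) [MOD p ^ N - 1] := by
    unfold Nat.ModEq
    conv_lhs => rw [Finset.sum_nat_mod]
    conv_rhs => rw [Finset.sum_nat_mod]
    congr 1
    exact Finset.sum_congr rfl fun i _ => hterm i
  have hdvd' : (p ^ N - 1) ∣ ∑ i, c i * p ^ (n i % N) :=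
    (Nat.modEq_zero_iff_dvd.mp ((hsum.trans (Nat.modEq_zero_iff_dvd.mpr hdvd))))
  -- bound the reduced sum
  have hub : (∑ i, c i * p ^ (n i % N)) ≤ (∑ i, c i) * p ^ (N - 1) := by
    rw [Finset.sum_mul]
    refine Finset.sum_le_sum fun i _ => ?_
    exact Nat.mul_le_mul_left _ (Nat.pow_le_pow_right (by omega)
      (by have := Nat.mod_lt (n i) (show 0 < N by omega); omega))
  have hlb : (∑ i, c i) ≤ ∑ i, c i * p ^ (n i % N) := by
    refine Finset.sum_le_sum fun i _ => ?_
    exact Nat.le_mul_of_pos_right _ (Nat.pow_pos (by omega))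
  have h1 : (∑ i, c i) * p ^ (N - 1) < p ^ N - 1 := by
    have : (∑ i, c i) * p ^ (N - 1) ≤ (p - 1) * p ^ (N - 1) :=
      Nat.mul_le_mul_right _ (by omega)
    have h2 : (p - 1) * p ^ (N - 1) = p * p ^ (N - 1) - p ^ (N - 1) :=
      Nat.sub_one_mul p _
    omega
  have := Nat.le_of_dvd (by omega) hdvd'
  omega
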